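/- Let C > 0, T > 0, let K : [0,T] → ℝ be a nonnegative Lebesgue-integrable function, and let Y : [0,T] → ℝ be a continuous function with Y(t) > 0 for all t ∈ [0,T] which satisfies the integral inequality Y(t) ≤ Y(0) + C ∫₀^t K(s) Y(s)² ds for all t ∈ [0,T]. If C Y(0) ∫₀^T K(s) ds < 1, then for every t ∈ [0,T] one has Y(t) ≤ Y(0) / (1 − C Y(0) ∫₀^t K(s) ds). -/

import Mathlib

open MeasureTheory Set Filter Topology


lemma prim_sub {f : ℝ → ℝ} (hint : Integrable f) (a b : ℝ) :
    (∫ s in (0:ℝ)..b, f s) - ∫ s in (0:ℝ)..a, f s = ∫ s in a..b, f s := by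
  have h := intervalIntegral.integral_add_adjacent_intervals
    (a := (0:ℝ)) (b := a) (c := b) hint.intervalIntegrable hint.intervalIntegrable
  linarith

lemma prim_mono {f : ℝ → ℝ} (hnn : ∀ x, 0 ≤ f x) (hint : Integrable f) :
    Monotone (fun t => ∫ s in (0:ℝ)..t, f s) := by
  intro a b hab
  have h1 := prim_sub hint a b
  have h2 : 0 ≤ ∫ s in a..b, f s :=
    intervalIntegral.integral_nonneg hab (fun x _ => hnn x)
  simp only []
  linarith

lemma prim_ae_deriv {f : ℝ → ℝ} (hm : Measurable f) (hnn : ∀ x, 0 ≤ f x)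
    (hint : Integrable f) :
    ∀ᵐ x, HasDerivAt (fun t => ∫ s in (0:ℝ)..t, f s) (f x) x := by
  set F : ℝ → ℝ := fun t => ∫ s in (0:ℝ)..t, f s with hFdef
  have hmono : Monotone F := prim_mono hnn hint
  have hcont : Continuous F :=
    intervalIntegral.continuous_primitive (fun _ _ => hint.intervalIntegrable) 0
  have hst : ∀ x, hmono.stieltjesFunction x = F x := by
    intro x
    rw [hmono.stieltjesFunction_eq]
    exact rightLim_eq_of_tendsto
      ((hcont.tendsto x).mono_left nhdsWithin_le_nhds)
  have hmeas : hmono.stieltjesFunction.measure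
      = volume.withDensity (fun x => ENNReal.ofReal (f x)) := by
    refine Measure.ext_of_Ioc _ _ (fun a b hab => ?_)
    rw [StieltjesFunction.measure_Ioc, hst, hst,
      withDensity_apply _ measurableSet_Ioc]
    rw [prim_sub hint a b, intervalIntegral.integral_of_le hab.le]
    exact ofReal_integral_eq_lintegral_ofReal hint.integrableOn
      (Eventually.of_forall (fun x => hnn x))
  filter_upwards [hmono.ae_hasDerivAt,
    Measure.rnDeriv_withDensity volume hm.ennreal_ofReal] with x hx hx2
  rw [hmeas] at hx
  rwa [hx2, ENNReal.toReal_ofReal (hnn x)] at hx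

lemma key_subst {f : ℝ → ℝ} (hm : Measurable f) (hnn : ∀ x, 0 ≤ f x) (hint : Integrable f)
    {g : ℝ → ℝ} (hgc : Continuous g) (hgnn : ∀ x, 0 ≤ g x) {τ : ℝ} (hτ : 0 ≤ τ) :
    ∫ s in (0:ℝ)..τ, f s * g (∫ u in (0:ℝ)..s, f u)
      ≤ ∫ u in (0:ℝ)..(∫ s in (0:ℝ)..τ, f s), g u := by
  set F : ℝ → ℝ := fun t => ∫ s in (0:ℝ)..t, f s with hFdef
  have hmono : Monotone F := prim_mono hnn hint
  have hF0 : F 0 = 0 := intervalIntegral.integral_same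
  have hFτ : 0 ≤ F τ := by
    have := hmono hτ
    rwa [hF0] at this
  set N := toMeasurable volume {x | ¬ HasDerivAt F (f x) x} with hNdef
  have hNnull : volume N = 0 := by
    rw [measure_toMeasurable]
    exact prim_ae_deriv hm hnn hint
  set s : Set ℝ := (Ioc 0 τ \ N) ∩ {x | 0 < f x} with hsdef
  have hsm : MeasurableSet s :=
    (measurableSet_Ioc.diff (measurableSet_toMeasurable _ _)).inter
      (measurableSet_lt measurable_const hm)
  have hderiv : ∀ x ∈ s, HasDerivAt F (f x) x := by
    intro x hx
    by_contra h
    exact hx.1.2 (subset_toMeasurable _ _ h)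
  have hstrict : ∀ x ∈ s, ∀ y, x < y → F x < F y := by
    intro x hx y hxy
    have hdx : HasDerivAt F (f x) x := hderiv x hx
    have hfx : 0 < f x := hx.2
    have hslope : Tendsto (slope F x) (𝓝[>] x) (𝓝 (f x)) :=
      (hasDerivAt_iff_tendsto_slope.1 hdx).mono_left
        (nhdsWithin_mono x (fun z hz => ne_of_gt hz))
    have hev : ∀ᶠ z in 𝓝[>] x, 0 < slope F x z :=
      hslope.eventually (eventually_gt_nhds hfx)
    have hmem : Ioo x y ∈ 𝓝[>] x := Ioo_mem_nhdsGT hxy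
    obtain ⟨z, hz1, hz2⟩ := (hev.and (eventually_of_mem hmem (fun z hz => hz))).exists
    have hzx : x < z := hz2.1
    have hpos : 0 < (F z - F x) / (z - x) := by
      simpa [slope_def_field] using hz1
    have hFzx : F x < F z := by
      have h1 : 0 < z - x := sub_pos.2 hzx
      nlinarith [mul_pos hpos h1, div_mul_cancel₀ (F z - F x) (ne_of_gt h1)]
    exact lt_of_lt_of_le hFzx (hmono hz2.2.le)
  have hinj : InjOn F s := by
    intro x hx y hy hxy
    by_contra hne
    rcases lt_or_gt_of_ne hne with h | h
    · exact (hstrict x hx y h).ne hxy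
    · exact (hstrict y hy x h).ne hxy.symm
  have hcov := integral_image_eq_integral_abs_deriv_smul hsm
    (fun x hx => (hderiv x hx).hasDerivWithinAt) hinj g
  have hLHS : ∫ x in (0:ℝ)..τ, f x * g (F x) = ∫ x in s, f x * g (F x) := by
    rw [intervalIntegral.integral_of_le hτ,
      ← integral_indicator measurableSet_Ioc, ← integral_indicator hsm]
    apply integral_congr_ae
    have hN : ∀ᵐ x, x ∉ N := (measure_eq_zero_iff_ae_notMem (μ := volume)).1 hNnull
    filter_upwards [hN] with x hxN
    by_cases hx : x ∈ Ioc 0 τ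
    · by_cases hfx : 0 < f x
      · have hxs : x ∈ s := ⟨⟨hx, hxN⟩, hfx⟩
        rw [Set.indicator_of_mem hx, Set.indicator_of_mem hxs]
      · have hfx0 : f x = 0 := le_antisymm (not_lt.1 hfx) (hnn x)
        have hxs : x ∉ s := fun h => hfx h.2
        rw [Set.indicator_of_mem hx, Set.indicator_of_notMem hxs, hfx0, zero_mul]
    · have hxs : x ∉ s := fun h => hx h.1.1
      rw [Set.indicator_of_notMem hx, Set.indicator_of_notMem hxs]
  have hRHS : ∫ x in s, |f x| • g (F x) = ∫ x in s, f x * g (F x) := by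
    apply integral_congr_ae
    refine Eventually.of_forall (fun x => ?_)
    simp only [smul_eq_mul, abs_of_nonneg (hnn x)]
  have himg : F '' s ⊆ Icc 0 (F τ) := by
    rintro _ ⟨x, hx, rfl⟩
    constructor
    · rw [← hF0]; exact hmono hx.1.1.1.le
    · exact hmono hx.1.1.2
  have hmonoset : ∫ x in F '' s, g x ≤ ∫ x in Icc 0 (F τ), g x := by
    apply setIntegral_mono_set (hgc.integrableOn_Icc)
      (Eventually.of_forall (fun x => hgnn x)) (HasSubset.Subset.eventuallyLE himg)
  calc ∫ x in (0:ℝ)..τ, f x * g (F x) = ∫ x in s, f x * g (F x) := hLHS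
    _ = ∫ x in F '' s, g x := by rw [hcov, hRHS]
    _ ≤ ∫ x in Icc 0 (F τ), g x := hmonoset
    _ = ∫ u in (0:ℝ)..(F τ), g u := by
        rw [intervalIntegral.integral_of_le hFτ, integral_Icc_eq_integral_Ioc]

theorem stmt15 (C T : ℝ) (hC : 0 < C) (hT : 0 < T) (K Y : ℝ → ℝ)
    (hKint : IntegrableOn K (Set.Icc 0 T))
    (hKnn : ∀ t ∈ Set.Icc (0:ℝ) T, 0 ≤ K t)
    (hYc : ContinuousOn Y (Set.Icc 0 T))
    (hYpos : ∀ t ∈ Set.Icc (0:ℝ) T, 0 < Y t)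
    (hY : ∀ t ∈ Set.Icc (0:ℝ) T, Y t ≤ Y 0 + C * ∫ s in (0:ℝ)..t, K s * Y s ^ 2)
    (hsmall : C * Y 0 * (∫ s in (0:ℝ)..T, K s) < 1) :
    ∀ t ∈ Set.Icc (0:ℝ) T, Y t ≤ Y 0 / (1 - C * Y 0 * ∫ s in (0:ℝ)..t, K s) := by
  have hKsm := hKint.aestronglyMeasurable
  set K' : ℝ → ℝ := hKsm.mk K with hK'def
  have hK'meas : Measurable K' := hKsm.stronglyMeasurable_mk.measurable
  have hK'ae : K =ᵐ[volume.restrict (Icc 0 T)] K' := hKsm.ae_eq_mk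
  set f : ℝ → ℝ := Set.indicator (Icc 0 T) (fun x => max (K' x) 0) with hfdef
  have hfm : Measurable f := (hK'meas.max measurable_const).indicator measurableSet_Icc
  have hfnn : ∀ x, 0 ≤ f x := fun x => Set.indicator_nonneg (fun y _ => le_max_right _ _) x
  have hfint : Integrable f := by
    rw [hfdef, integrable_indicator_iff measurableSet_Icc]
    exact (hKint.congr hK'ae).pos_part
  have hfK : f =ᵐ[volume.restrict (Icc 0 T)] K := by
    filter_upwards [hK'ae, ae_restrict_mem measurableSet_Icc] with x hx hmem
    rw [hfdef]
    simp only [Set.indicator_of_mem hmem]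
    rw [← hx, max_eq_left (hKnn x hmem)]
  set F : ℝ → ℝ := fun t => ∫ s in (0:ℝ)..t, f s with hFdef
  have hFmono : Monotone F := prim_mono hfnn hfint
  have hF0 : F 0 = 0 := intervalIntegral.integral_same
  have hFt_nn : ∀ t, 0 ≤ t → 0 ≤ F t := fun t ht => hF0 ▸ hFmono ht
  have hFK : ∀ t ∈ Icc (0:ℝ) T, F t = ∫ s in (0:ℝ)..t, K s := by
    intro t ht
    show ∫ s in (0:ℝ)..t, f s = ∫ s in (0:ℝ)..t, K s
    rw [intervalIntegral.integral_of_le ht.1, intervalIntegral.integral_of_le ht.1]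
    exact integral_congr_ae (ae_restrict_of_ae_restrict_of_subset
      (Ioc_subset_Icc_self.trans (Icc_subset_Icc_right ht.2)) hfK)
  have hY0pos : 0 < Y 0 := hYpos 0 ⟨le_refl 0, hT.le⟩
  have hFTnn : 0 ≤ F T := hFt_nn T hT.le
  have hsmall' : C * Y 0 * F T < 1 := by
    rw [hFK T ⟨hT.le, le_refl T⟩]; exact hsmall
  have hFcont : Continuous F :=
    intervalIntegral.continuous_primitive (fun _ _ => hfint.intervalIntegrable) 0
  -- main bootstrap claim
  have main : ∀ A : ℝ, Y 0 < A → C * A * F T < 1 →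
      ∀ t ∈ Icc (0:ℝ) T, Y t < A / (1 - C * A * F t) := by
    intro A hA hA1
    have hApos : 0 < A := hY0pos.trans hA
    set c : ℝ := 1 - C * A * F T with hcdef
    have hc : 0 < c := by rw [hcdef]; linarith
    have hden : ∀ t ∈ Icc (0:ℝ) T, c ≤ 1 - C * A * F t := by
      intro t ht
      have h1 : F t ≤ F T := hFmono ht.2
      rw [hcdef]
      nlinarith [mul_pos hC hApos]
    set M : ℝ → ℝ := fun t => A / (1 - C * A * F t) with hMdef
    have hMcont : ContinuousOn M (Icc 0 T) := by
      apply ContinuousOn.div continuousOn_const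
        ((continuous_const.sub (continuous_const.mul hFcont)).continuousOn)
      intro t ht
      exact ne_of_gt (lt_of_lt_of_le hc (hden t ht))
    by_contra hcon
    push_neg at hcon
    obtain ⟨t0, ht0, ht0M⟩ := hcon
    set S : Set ℝ := {t | t ∈ Icc (0:ℝ) T ∧ M t ≤ Y t} with hSdef
    have hSne : S.Nonempty := ⟨t0, ht0, ht0M⟩
    have hSbdd : BddBelow S := ⟨0, fun x hx => hx.1.1⟩
    have hSclosed : IsClosed S := by
      have h := ContinuousOn.preimage_isClosed_of_isClosed
        (hYc.sub hMcont) isClosed_Icc (isClosed_Ici (a := (0:ℝ)))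
      convert h using 1
      ext x
      simp only [hSdef, Set.mem_setOf_eq, Set.mem_inter_iff, Set.mem_preimage,
        Set.mem_Ici, Pi.sub_apply, sub_nonneg]
    set τ := sInf S with hτdef
    have hτS : τ ∈ S := hSclosed.closure_eq ▸ csInf_mem_closure hSne hSbdd
    have hτIcc : τ ∈ Icc (0:ℝ) T := hτS.1
    have hMτ : M τ ≤ Y τ := hτS.2
    have hM0 : M 0 = A := by rw [hMdef]; simp [hF0]
    have hτpos : 0 < τ := by
      rcases lt_or_eq_of_le hτIcc.1 with h | h
      · exact h
      · exfalso
        rw [← h] at hMτ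
        rw [hM0] at hMτ
        linarith
    have hYltM : ∀ x, 0 < x → x < τ → Y x < M x := by
      intro x hx0 hxτ
      by_contra hcontra
      have hxS : x ∈ S := ⟨⟨hx0.le, hxτ.le.trans hτIcc.2⟩, not_lt.1 hcontra⟩
      exact absurd (csInf_le hSbdd hxS) (not_le.2 hxτ)
    obtain ⟨bM, hbM⟩ := (isCompact_Icc (a := (0:ℝ)) (b := T)).exists_bound_of_continuousOn hMcont
    obtain ⟨bY, hbY⟩ := (isCompact_Icc (a := (0:ℝ)) (b := T)).exists_bound_of_continuousOn hYc
    have hIocIcc : Ioc 0 τ ⊆ Icc (0:ℝ) T := fun x hx => ⟨hx.1.le, hx.2.trans hτIcc.2⟩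
    have hIooIcc : Ioo 0 τ ⊆ Icc (0:ℝ) T := fun x hx => ⟨hx.1.le, hx.2.le.trans hτIcc.2⟩
    have hKIoo : IntegrableOn K (Ioo 0 τ) := hKint.mono_set hIooIcc
    have hfIoo : IntegrableOn f (Ioo 0 τ) := hfint.integrableOn
    have hYaesm : AEStronglyMeasurable Y (volume.restrict (Ioo 0 τ)) :=
      (hYc.mono hIooIcc).aestronglyMeasurable measurableSet_Ioo
    have hMaesm : AEStronglyMeasurable M (volume.restrict (Ioo 0 τ)) :=
      (hMcont.mono hIooIcc).aestronglyMeasurable measurableSet_Ioo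
    have hint1 : IntegrableOn (fun x => K x * Y x ^ 2) (Ioo 0 τ) := by
      have h := Integrable.bdd_mul (c := bY ^ 2) hKIoo
        ((hYaesm.mul hYaesm).congr (Eventually.of_forall (fun x => (pow_two (Y x)).symm)))
        (by
          filter_upwards [ae_restrict_mem measurableSet_Ioo] with x hx
          have : ‖Y x ^ 2‖ = ‖Y x‖ ^ 2 := by
            rw [Real.norm_eq_abs, Real.norm_eq_abs, abs_pow]
          rw [this]
          exact pow_le_pow_left₀ (norm_nonneg _) (hbY x (hIooIcc hx)) 2)
      exact h.congr (Eventually.of_forall (fun x => mul_comm _ _))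
    have hint2 : IntegrableOn (fun x => f x * M x ^ 2) (Ioo 0 τ) := by
      have h := Integrable.bdd_mul (c := bM ^ 2) hfIoo
        ((hMaesm.mul hMaesm).congr (Eventually.of_forall (fun x => (pow_two (M x)).symm)))
        (by
          filter_upwards [ae_restrict_mem measurableSet_Ioo] with x hx
          have : ‖M x ^ 2‖ = ‖M x‖ ^ 2 := by
            rw [Real.norm_eq_abs, Real.norm_eq_abs, abs_pow]
          rw [this]
          exact pow_le_pow_left₀ (norm_nonneg _) (hbM x (hIooIcc hx)) 2)
      exact h.congr (Eventually.of_forall (fun x => mul_comm _ _))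
    have h2 : ∫ x in (0:ℝ)..τ, K x * Y x ^ 2 ≤ ∫ x in (0:ℝ)..τ, f x * M x ^ 2 := by
      rw [intervalIntegral.integral_of_le hτpos.le, intervalIntegral.integral_of_le hτpos.le,
        integral_Ioc_eq_integral_Ioo, integral_Ioc_eq_integral_Ioo]
      apply setIntegral_mono_ae_restrict hint1 hint2
      have hfK' : f =ᵐ[volume.restrict (Ioo 0 τ)] K :=
        ae_restrict_of_ae_restrict_of_subset hIooIcc hfK
      filter_upwards [ae_restrict_mem measurableSet_Ioo, hfK'] with x hx hfx
      have hYx : 0 < Y x := hYpos x (hIooIcc hx)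
      have hYM : Y x ≤ M x := (hYltM x hx.1 hx.2).le
      have hsq : Y x ^ 2 ≤ M x ^ 2 := pow_le_pow_left₀ hYx.le hYM 2
      calc K x * Y x ^ 2 = f x * Y x ^ 2 := by rw [hfx]
        _ ≤ f x * M x ^ 2 := mul_le_mul_of_nonneg_left hsq (hfnn x)
    set g : ℝ → ℝ := fun u => C * A ^ 2 / max (1 - C * A * u) c ^ 2 with hgdef
    have hgc : Continuous g := by
      apply Continuous.div continuous_const
        (((continuous_const.sub (continuous_const.mul continuous_id)).max continuous_const).pow 2)
      intro x
      exact pow_ne_zero 2 (ne_of_gt (lt_of_lt_of_le hc (le_max_right _ _)))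
    have hgnn : ∀ u, 0 ≤ g u := fun u => div_nonneg (by positivity) (by positivity)
    have hkey := key_subst hfm hfnn hfint hgc hgnn hτpos.le
    have hgF : ∀ x ∈ Icc (0:ℝ) T, f x * g (F x) = C * (f x * M x ^ 2) := by
      intro x hx
      have h1 : c ≤ 1 - C * A * F x := hden x hx
      have hne : (1 - C * A * F x) ≠ 0 := ne_of_gt (lt_of_lt_of_le hc h1)
      rw [hgdef, hMdef]
      simp only
      rw [max_eq_left h1]
      field_simp
    have hLHSeq : ∫ x in (0:ℝ)..τ, f x * g (F x) = C * ∫ x in (0:ℝ)..τ, f x * M x ^ 2 := by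
      rw [← intervalIntegral.integral_const_mul]
      apply intervalIntegral.integral_congr_ae
      refine Eventually.of_forall (fun x hx => ?_)
      rw [uIoc_of_le hτpos.le] at hx
      exact hgF x (hIocIcc hx)
    have hFτle : F τ ≤ F T := hFmono hτIcc.2
    have hFτnn : 0 ≤ F τ := hFt_nn τ hτpos.le
    have hRHSeq : ∫ u in (0:ℝ)..(F τ), g u = M τ - A := by
      have hder : ∀ u ∈ uIcc (0:ℝ) (F τ),
          HasDerivAt (fun u => A * (1 - C * A * u)⁻¹) (g u) u := by
        intro u hu
        rw [uIcc_of_le hFτnn] at hu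
        have h1 : c ≤ 1 - C * A * u := by
          have h3 : u ≤ F T := hu.2.trans hFτle
          rw [hcdef]
          nlinarith [mul_pos hC hApos, hu.1]
        have hne : (1 - C * A * u) ≠ 0 := ne_of_gt (lt_of_lt_of_le hc h1)
        have hd0 : HasDerivAt (fun u : ℝ => 1 - C * A * u) (-(C * A)) u := by
          simpa using ((hasDerivAt_id u).const_mul (C * A)).const_sub 1
        have hd1 := (hd0.inv hne).const_mul A
        refine HasDerivAt.congr_deriv hd1 (Eq.symm ?_)
        rw [hgdef]
        simp only
        rw [max_eq_left h1]
        field_simp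
      rw [intervalIntegral.integral_eq_sub_of_hasDerivAt hder (hgc.intervalIntegrable _ _)]
      rw [hMdef]
      simp only
      rw [mul_zero, sub_zero]
      have hne : (1 - C * A * F τ) ≠ 0 := ne_of_gt (lt_of_lt_of_le hc (hden τ hτIcc))
      field_simp
    have h1 := hY τ hτIcc
    have hCh2 : C * ∫ x in (0:ℝ)..τ, K x * Y x ^ 2 ≤ C * ∫ x in (0:ℝ)..τ, f x * M x ^ 2 :=
      mul_le_mul_of_nonneg_left h2 hC.le
    rw [hLHSeq, hRHSeq] at hkey
    have : Y τ < M τ := by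
      calc Y τ ≤ Y 0 + C * ∫ s in (0:ℝ)..τ, K s * Y s ^ 2 := h1
        _ < A + C * ∫ s in (0:ℝ)..τ, K s * Y s ^ 2 := by linarith
        _ ≤ A + C * ∫ x in (0:ℝ)..τ, f x * M x ^ 2 := by linarith
        _ ≤ A + (M τ - A) := by linarith
        _ = M τ := by ring
    exact absurd hMτ (not_le.2 this)
  -- limit step
  intro t ht
  have hFtnn : 0 ≤ F t := hFt_nn t ht.1
  have hFtle : F t ≤ F T := hFmono ht.2
  have hdpos : 0 < 1 - C * Y 0 * F t := by nlinarith [mul_pos hC hY0pos]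
  set ε0 : ℝ := (1 - C * Y 0 * F T) / (2 * C * (F T + 1)) with hε0def
  have h2pos : 0 < 2 * C * (F T + 1) := by nlinarith
  have hε0pos : 0 < ε0 := div_pos (by linarith) h2pos
  have hε0small : C * (Y 0 + ε0) * F T < 1 := by
    have hkey : C * ε0 * F T < 1 - C * Y 0 * F T := by
      have h3 : C * ε0 * F T = (1 - C * Y 0 * F T) * (C * F T) / (2 * C * (F T + 1)) := by
        rw [hε0def]; ring
      rw [h3, div_lt_iff₀ h2pos]
      nlinarith [mul_nonneg hC.le hFTnn, mul_pos (show (0:ℝ) < 1 - C * Y 0 * F T by linarith) hC]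
    nlinarith
  have hev : ∀ᶠ ε in 𝓝[>] (0:ℝ), Y t ≤ (Y 0 + ε) / (1 - C * (Y 0 + ε) * F t) := by
    filter_upwards [Ioo_mem_nhdsGT hε0pos] with ε hε
    have hεA : C * (Y 0 + ε) * F T < 1 := by nlinarith [hε.1, hε.2]
    exact (main (Y 0 + ε) (by linarith [hε.1]) hεA t ht).le
  have hlim : Tendsto (fun ε : ℝ => (Y 0 + ε) / (1 - C * (Y 0 + ε) * F t)) (𝓝[>] (0:ℝ))
      (𝓝 (Y 0 / (1 - C * Y 0 * F t))) := by
    have hc1 : Continuous (fun ε : ℝ => Y 0 + ε) := continuous_const.add continuous_id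
    have hc2 : Continuous (fun ε : ℝ => 1 - C * (Y 0 + ε) * F t) :=
      continuous_const.sub ((continuous_const.mul hc1).mul continuous_const)
    have h1 : Tendsto (fun ε : ℝ => Y 0 + ε) (𝓝[>] (0:ℝ)) (𝓝 (Y 0)) := by
      have := (hc1.tendsto (0:ℝ)).mono_left (nhdsWithin_le_nhds (s := Ioi (0:ℝ)))
      simpa using this
    have h2 : Tendsto (fun ε : ℝ => 1 - C * (Y 0 + ε) * F t) (𝓝[>] (0:ℝ))
        (𝓝 (1 - C * Y 0 * F t)) := by
      have := (hc2.tendsto (0:ℝ)).mono_left (nhdsWithin_le_nhds (s := Ioi (0:ℝ)))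
      simpa using this
    exact h1.div h2 (ne_of_gt hdpos)
  have hfinal := ge_of_tendsto hlim hev
  rwa [hFK t ht] at hfinal
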